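/- If n is an odd positive integer, then γ'_SMB(P_n) = ⌊log_2 n⌋ + 1, where P_n is the path on n vertices. -/

import Mathlib

open scoped Classical

open scoped Classical

noncomputable section

/-- Minimax value of the Maker–Breaker game on hypergraph with edge set `E`:
`mbVal E t M B` is the minimum number of further moves Maker needs to claim all
vertices of some hyperedge (Maker has claimed `M`, Breaker has claimed `B`,
`t = true` iff Maker moves next), under optimal play; `⊤` if Maker cannot win. -/
def mbVal {V : Type} [Fintype V] (E : Set (Finset V)) :
    Bool → Finset V → Finset V → ℕ∞
  | true, M, B =>
      if ∃ e ∈ E, e ⊆ M then 0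
      else ⨅ v ∈ Finset.univ \ (M ∪ B), (1 + mbVal E false (insert v M) B)
  | false, M, B =>
      if ∃ e ∈ E, e ⊆ M then 0
      else if Finset.univ \ (M ∪ B) = ∅ then ⊤
      else ⨆ v ∈ Finset.univ \ (M ∪ B), mbVal E true M (insert v B)
termination_by _t M B => (Finset.univ \ (M ∪ B)).card
decreasing_by
  all_goals
    apply Finset.card_lt_card
    rw [Finset.ssubset_iff_of_subset]
    · refine ⟨v, ‹_›, by simp⟩
    · intro x hx
      simp only [Finset.mem_sdiff, Finset.mem_univ, true_and, Finset.mem_union,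
        Finset.mem_insert] at hx ⊢
      tauto

/-- The closed neighborhood of `v` as a finset. -/
def closedNbhdFinset {V : Type} [Fintype V] (G : SimpleGraph V) (v : V) : Finset V :=
  Finset.univ.filter (fun w => w = v ∨ G.Adj v w)

/-- The closed neighborhood hypergraph of a graph. -/
def nbhdHyp {V : Type} [Fintype V] (G : SimpleGraph V) : Set (Finset V) :=
  Set.range (closedNbhdFinset G)

/-- `γ'_SMB(G)`: the number of moves Staller (= Maker on the closed neighborhood
hypergraph, moving first) needs to win the Maker–Breaker domination game on `G`. -/
def gammaSMB' {V : Type} [Fintype V] (G : SimpleGraph V) : ℕ∞ :=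
  mbVal (nbhdHyp G) true ∅ ∅

end


noncomputable section Dev
open Finset SimpleGraph

variable {n : ℕ}

/-- `x` is in the closed neighborhood of `w` (ℕ-level). -/
def Nb (w x : ℕ) : Prop := x = w ∨ x + 1 = w ∨ w + 1 = x

lemma mem_cnf {w x : Fin n} :
    x ∈ closedNbhdFinset (pathGraph n) w ↔ Nb w.val x.val := by
  simp only [closedNbhdFinset, Finset.mem_filter, Finset.mem_univ, true_and,
    SimpleGraph.pathGraph_adj, Nb, Fin.ext_iff]
  omega

/-- membership of a ℕ value in a finset of `Fin n`. -/
def inF (S : Finset (Fin n)) (x : ℕ) : Prop := ∃ h : x < n, (⟨x, h⟩ : Fin n) ∈ S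

lemma inF_iff {S : Finset (Fin n)} {x : Fin n} : inF S x.val ↔ x ∈ S := by
  constructor
  · rintro ⟨h, hm⟩; simpa using hm
  · intro h; exact ⟨x.isLt, by simpa using h⟩

lemma mbVal_true_eq (E : Set (Finset (Fin n))) (M B : Finset (Fin n)) :
    mbVal E true M B = if ∃ e ∈ E, e ⊆ M then 0
      else ⨅ v ∈ Finset.univ \ (M ∪ B), (1 + mbVal E false (insert v M) B) := by
  rw [mbVal]; congr!

lemma mbVal_false_eq (E : Set (Finset (Fin n))) (M B : Finset (Fin n)) :
    mbVal E false M B = if ∃ e ∈ E, e ⊆ M then 0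
      else if Finset.univ \ (M ∪ B) = ∅ then ⊤
      else ⨆ v ∈ Finset.univ \ (M ∪ B), mbVal E true M (insert v B) := by
  rw [mbVal]; congr!

lemma cnf_mem_E (w : Fin n) :
    closedNbhdFinset (pathGraph n) w ∈ nbhdHyp (pathGraph n) := ⟨w, rfl⟩

/-- Dominator's safety invariant: a long free active interval `[a,b]`,
with all threats elsewhere covered by a pairing `P` (pairs `{p,p+1}`). -/
def DomInv (n j : ℕ) (M B : Finset (Fin n)) : Prop :=
  ∃ a b : ℕ, ∃ P : Finset ℕ,
    a ≤ b ∧ b < n ∧ 2 ^ j ≤ b + 1 - a ∧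
    (∀ x : Fin n, a ≤ x.val → x.val ≤ b → x ∉ M ∧ x ∉ B) ∧
    (∀ p ∈ P, p + 1 < n ∧ ¬ inF M p ∧ ¬ inF B p ∧ ¬ inF M (p+1) ∧ ¬ inF B (p+1) ∧
      (p + 1 < a ∨ b < p)) ∧
    (∀ p ∈ P, ∀ q ∈ P, p ≠ q → p + 1 ≠ q ∧ q + 1 ≠ p) ∧
    (∀ x : Fin n, x ∈ M → x ∉ B) ∧
    (∀ w : Fin n, (∀ x : Fin n, Nb w.val x.val → x ∉ B) →
      ((∀ x : Fin n, Nb w.val x.val → x ∉ M → a ≤ x.val ∧ x.val ≤ b) ∧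
       (∃ x y : Fin n, x ≠ y ∧ Nb w.val x.val ∧ Nb w.val y.val ∧ x ∉ M ∧ y ∉ M)) ∨
      (∃ p ∈ P, Nb w.val p ∧ Nb w.val (p+1)))

/-- No edge is contained in `M ∪ {v}` under the invariant, for `v ∉ B`. -/
lemma DomInv_noWin {j : ℕ} {M B : Finset (Fin n)} (h : DomInv n j M B)
    {v : Fin n} (hvB : v ∉ B) :
    ¬ ∃ e ∈ nbhdHyp (pathGraph n), e ⊆ insert v M := by
  rintro ⟨e, ⟨w, rfl⟩, hsub⟩
  obtain ⟨a, b, P, hab, hbn, hL, hact, hP, hPd, hMB, hcov⟩ := h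
  have hlive : ∀ x : Fin n, Nb w.val x.val → x ∉ B := by
    intro x hx hxB
    have := hsub (mem_cnf.2 hx)
    rcases Finset.mem_insert.1 this with rfl | hxM
    · exact hvB hxB
    · exact hMB x hxM hxB
  rcases hcov w hlive with ⟨-, x, y, hxy, hx1, hy1, hxM, hyM⟩ | ⟨p, hpP, hp1, hp2⟩
  · have hx := hsub (mem_cnf.2 hx1)
    have hy := hsub (mem_cnf.2 hy1)
    rcases Finset.mem_insert.1 hx with rfl | h'
    · rcases Finset.mem_insert.1 hy with h'' | h''
      · exact hxy h''.symm
      · exact hyM h''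
    · exact hxM h'
  · obtain ⟨hpn, hMp, -, hMp1, -, -⟩ := hP p hpP
    have hpn' : p < n := by omega
    have h1 := hsub (mem_cnf.2 (show Nb w.val ((⟨p, hpn'⟩ : Fin n)).val from hp1))
    have h2 := hsub (mem_cnf.2 (show Nb w.val ((⟨p+1, hpn⟩ : Fin n)).val from hp2))
    rcases Finset.mem_insert.1 h1 with h1' | h1'
    · rcases Finset.mem_insert.1 h2 with h2' | h2'
      · have := congrArg Fin.val h1'
        have := congrArg Fin.val h2'
        simp_all
      · exact hMp1 ⟨hpn, h2'⟩
    · exact hMp ⟨hpn', h1'⟩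

lemma val_ne {x y : Fin n} (h : x ≠ y) : x.val ≠ y.val := fun h' => h (Fin.ext h')

lemma notMem_insert_of {S : Finset (Fin n)} {z x : Fin n} (h1 : x ∉ S)
    (h2 : x.val ≠ z.val) : x ∉ insert z S := by
  intro hm
  rcases Finset.mem_insert.1 hm with rfl | hm
  · exact h2 rfl
  · exact h1 hm

lemma not_inF_insert {S : Finset (Fin n)} {z : Fin n} {x : ℕ} (h1 : ¬ inF S x)
    (h2 : x ≠ z.val) : ¬ inF (insert z S) x := by
  rintro ⟨h, hm⟩
  rcases Finset.mem_insert.1 hm with h' | h'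
  · exact h2 (congrArg Fin.val h')
  · exact h1 ⟨h, h'⟩

lemma not_inF_of_act {S : Finset (Fin n)} {x : ℕ} (hx : x < n)
    (h : (⟨x, hx⟩ : Fin n) ∉ S) : ¬ inF S x := by
  rintro ⟨h', hm⟩; exact h hm

lemma disj_insert {M B : Finset (Fin n)} {v u : Fin n} (h : ∀ x ∈ M, x ∉ B)
    (h1 : v.val ≠ u.val) (h2 : v ∉ B) (h3 : u ∉ M) :
    ∀ x ∈ insert v M, x ∉ insert u B := by
  intro x hx hxB
  rcases Finset.mem_insert.1 hx with rfl | hx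
  · rcases Finset.mem_insert.1 hxB with rfl | hxB
    · exact h1 rfl
    · exact h2 hxB
  · rcases Finset.mem_insert.1 hxB with rfl | hxB
    · exact h3 hx
    · exact h x hx hxB

lemma wits_bound {a b w x y : ℕ} (hxy : x ≠ y) (hx : Nb w x) (hy : Nb w y)
    (hax : a ≤ x) (hxb : x ≤ b) (hay : a ≤ y) (hyb : y ≤ b) : a ≤ w ∧ w ≤ b := by
  unfold Nb at hx hy; omega

/-- Pairing of an interval `[vv+2, b]` from the right covers all `N[w]`,
`vv+3 ≤ w ≤ b`. -/
lemma pairsR_cover {b vv w : ℕ} (h3 : vv + 3 ≤ w) (hw : w ≤ b) :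
    ∃ q, (∃ i ∈ Finset.range ((b - vv - 1)/2), b - 1 - 2*i = q) ∧ Nb w q ∧
      Nb w (q+1) ∧ vv + 2 ≤ q ∧ q + 1 ≤ b := by
  rcases Nat.mod_two_eq_zero_or_one (b - w) with hpar | hpar
  · refine ⟨w - 1, ⟨(b-w)/2, Finset.mem_range.2 ?_, ?_⟩, ?_, ?_, ?_, ?_⟩ <;>
      (try unfold Nb) <;> omega
  · refine ⟨w, ⟨(b-w-1)/2, Finset.mem_range.2 ?_, ?_⟩, ?_, ?_, ?_, ?_⟩ <;>
      (try unfold Nb) <;> omega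

/-- Pairing of an interval `[a, vv-2]` from the left covers all `N[w]`,
`a ≤ w ≤ vv-3`. -/
lemma pairsL_cover {a vv w : ℕ} (h3 : a ≤ w) (hw : w + 3 ≤ vv) :
    ∃ q, (∃ i ∈ Finset.range ((vv - 1 - a)/2), a + 2*i = q) ∧ Nb w q ∧
      Nb w (q+1) ∧ a ≤ q ∧ q + 1 ≤ vv - 2 := by
  rcases Nat.mod_two_eq_zero_or_one (w - a) with hpar | hpar
  · refine ⟨w, ⟨(w-a)/2, Finset.mem_range.2 ?_, ?_⟩, ?_, ?_, ?_, ?_⟩ <;>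
      (try unfold Nb) <;> omega
  · refine ⟨w - 1, ⟨(w-1-a)/2, Finset.mem_range.2 ?_, ?_⟩, ?_, ?_, ?_, ?_⟩ <;>
      (try unfold Nb) <;> omega

set_option maxHeartbeats 1000000 in
/-- Dominator's invariant can be maintained: whatever Staller plays,
Dominator has a reply restoring the invariant one level down. -/
lemma maintain {j : ℕ} {M B : Finset (Fin n)} (hj : 1 ≤ j)
    (h : DomInv n (j+1) M B) {v : Fin n} (hvM : v ∉ M) (hvB : v ∉ B) :
    ∃ u : Fin n, u.val ≠ v.val ∧ u ∉ M ∧ u ∉ B ∧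
      DomInv n j (insert v M) (insert u B) := by
  obtain ⟨a, b, P, hab, hbn, hL, hact, hP, hPd, hMB, hcov⟩ := h
  have hpow : (2:ℕ)^(j+1) = 2*2^j := by ring
  have h2j : 2 ≤ 2^j := by
    calc (2:ℕ) = 2^1 := rfl
    _ ≤ 2^j := Nat.pow_le_pow_right (by norm_num) hj
  by_cases hin : a ≤ v.val ∧ v.val ≤ b
  · -- Staller plays inside the active interval
    rcases le_or_gt (b - v.val) (v.val - a) with hside | hside
    · by_cases hvb : v.val < b
      · -- case I1
        have hl2 : 2^j ≤ v.val - a := by omega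
        have hu1n : v.val + 1 < n := by omega
        have huM : (⟨v.val+1, hu1n⟩ : Fin n) ∉ M :=
          (hact ⟨v.val+1, hu1n⟩ (show a ≤ v.val+1 by omega) (show v.val+1 ≤ b by omega)).1
        have huB : (⟨v.val+1, hu1n⟩ : Fin n) ∉ B :=
          (hact ⟨v.val+1, hu1n⟩ (show a ≤ v.val+1 by omega) (show v.val+1 ≤ b by omega)).2
        refine ⟨⟨v.val+1, hu1n⟩, show v.val+1 ≠ v.val by omega, huM, huB,
          a, v.val-1, P ∪ (Finset.range ((b - v.val - 1)/2)).image (fun i => b - 1 - 2*i),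
          by omega, by omega, by omega, ?_, ?_, ?_, ?_, ?_⟩
        · intro x hx1 hx2
          exact ⟨notMem_insert_of (hact x hx1 (by omega)).1 (by omega),
            notMem_insert_of (hact x hx1 (by omega)).2 (show x.val ≠ v.val+1 by omega)⟩
        · intro p hpP
          rcases Finset.mem_union.1 hpP with hpP | hpP
          · obtain ⟨h1, h2, h3, h4, h5, h6⟩ := hP p hpP
            exact ⟨h1, not_inF_insert h2 (by omega),
              not_inF_insert h3 (show p ≠ v.val+1 by omega),
              not_inF_insert h4 (by omega),
              not_inF_insert h5 (show p+1 ≠ v.val+1 by omega), by omega⟩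
          · obtain ⟨i, hi, rfl⟩ := Finset.mem_image.1 hpP
            have hi' := Finset.mem_range.1 hi
            have hq1 : v.val + 2 ≤ b - 1 - 2*i := by omega
            have hqn : b - 1 - 2*i < n := by omega
            have hqn1 : b - 1 - 2*i + 1 < n := by omega
            refine ⟨by omega,
              not_inF_insert (not_inF_of_act hqn
                (hact ⟨b-1-2*i, hqn⟩ (show a ≤ b-1-2*i by omega)
                  (show b-1-2*i ≤ b by omega)).1) (by omega),
              not_inF_insert (not_inF_of_act hqn
                (hact ⟨b-1-2*i, hqn⟩ (show a ≤ b-1-2*i by omega)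
                  (show b-1-2*i ≤ b by omega)).2) (show b-1-2*i ≠ v.val+1 by omega),
              not_inF_insert (not_inF_of_act hqn1
                (hact ⟨b-1-2*i+1, hqn1⟩ (show a ≤ b-1-2*i+1 by omega)
                  (show b-1-2*i+1 ≤ b by omega)).1) (by omega),
              not_inF_insert (not_inF_of_act hqn1
                (hact ⟨b-1-2*i+1, hqn1⟩ (show a ≤ b-1-2*i+1 by omega)
                  (show b-1-2*i+1 ≤ b by omega)).2) (show b-1-2*i+1 ≠ v.val+1 by omega),
              by omega⟩
        · intro p hpP q hqP hne
          rcases Finset.mem_union.1 hpP with hp' | hp' <;>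
            rcases Finset.mem_union.1 hqP with hq' | hq'
          · exact hPd p hp' q hq' hne
          · obtain ⟨i, hi, rfl⟩ := Finset.mem_image.1 hq'
            have hi' := Finset.mem_range.1 hi
            have h6 := (hP p hp').2.2.2.2.2
            constructor <;> omega
          · obtain ⟨i, hi, rfl⟩ := Finset.mem_image.1 hp'
            have hi' := Finset.mem_range.1 hi
            have h6 := (hP q hq').2.2.2.2.2
            constructor <;> omega
          · obtain ⟨i, hi, rfl⟩ := Finset.mem_image.1 hp'
            obtain ⟨i2, hi2, rfl⟩ := Finset.mem_image.1 hq'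
            have hi' := Finset.mem_range.1 hi
            have hi2' := Finset.mem_range.1 hi2
            constructor <;> omega
        · exact disj_insert hMB (show v.val ≠ v.val+1 by omega) hvB huM
        · intro w hlive'
          have hlive : ∀ x : Fin n, Nb w.val x.val → x ∉ B :=
            fun x hx hxB => hlive' x hx (Finset.mem_insert_of_mem hxB)
          have hnbu : ¬ Nb w.val (v.val+1) :=
            fun hN => hlive' ⟨v.val+1, hu1n⟩ hN (Finset.mem_insert_self _ _)
          unfold Nb at hnbu
          rcases hcov w hlive with ⟨hA1, x, y, hxy, hx1, hy1, hxM, hyM⟩ | ⟨q, hqP, hq1, hq2⟩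
          · have hbx := hA1 x hx1 hxM
            have hby := hA1 y hy1 hyM
            have hwb := wits_bound (val_ne hxy) hx1 hy1 hbx.1 hbx.2 hby.1 hby.2
            have hx1' := hx1; have hy1' := hy1
            unfold Nb at hx1' hy1'
            rcases (show w.val + 2 ≤ v.val ∨ w.val + 1 = v.val ∨ v.val + 3 ≤ w.val
              by omega) with hw | hw | hw
            · left
              refine ⟨?_, x, y, hxy, hx1, hy1, notMem_insert_of hxM (by omega),
                notMem_insert_of hyM (by omega)⟩
              intro z hz hzM'
              have hzM : z ∉ M := fun hq' => hzM' (Finset.mem_insert_of_mem hq')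
              have hbz := hA1 z hz hzM
              have hz' := hz; unfold Nb at hz'
              omega
            · left
              have hm2 : v.val - 2 < n := by omega
              have hm1 : v.val - 1 < n := by omega
              have hM2 : (⟨v.val-2, hm2⟩ : Fin n) ∉ M :=
                (hact _ (show a ≤ v.val-2 by omega) (show v.val-2 ≤ b by omega)).1
              have hM1 : (⟨v.val-1, hm1⟩ : Fin n) ∉ M :=
                (hact _ (show a ≤ v.val-1 by omega) (show v.val-1 ≤ b by omega)).1
              refine ⟨?_, ⟨v.val-2, hm2⟩, ⟨v.val-1, hm1⟩,
                by simp only [ne_eq, Fin.mk.injEq]; omega,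
                by unfold Nb; simp only [Fin.val_mk]; omega,
                by unfold Nb; simp only [Fin.val_mk]; omega,
                notMem_insert_of hM2 (show v.val-2 ≠ v.val by omega),
                notMem_insert_of hM1 (show v.val-1 ≠ v.val by omega)⟩
              intro z hz hzM'
              have hzv : z.val ≠ v.val := by
                intro he
                exact hzM' (by rw [show z = v from Fin.ext he]; exact Finset.mem_insert_self _ _)
              have hzM : z ∉ M := fun hq' => hzM' (Finset.mem_insert_of_mem hq')
              have hbz := hA1 z hz hzM
              have hz' := hz; unfold Nb at hz'
              omega
            · right
              obtain ⟨q, ⟨i, hi, hqe⟩, k1, k2, k3, k4⟩ := pairsR_cover hw hwb.2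
              exact ⟨q, Finset.mem_union_right _ (Finset.mem_image.2 ⟨i, hi, hqe⟩), k1, k2⟩
          · right
            exact ⟨q, Finset.mem_union_left _ hqP, hq1, hq2⟩
      · -- case I2 : v = b
        have hvv : v.val = b := by omega
        have hbn1 : b - 1 < n := by omega
        have huM : (⟨b-1, hbn1⟩ : Fin n) ∉ M :=
          (hact ⟨b-1, hbn1⟩ (show a ≤ b-1 by omega) (show b-1 ≤ b by omega)).1
        have huB : (⟨b-1, hbn1⟩ : Fin n) ∉ B :=
          (hact ⟨b-1, hbn1⟩ (show a ≤ b-1 by omega) (show b-1 ≤ b by omega)).2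
        refine ⟨⟨b-1, hbn1⟩, show b-1 ≠ v.val by omega, huM, huB,
          a, b-2, P, by omega, by omega, by omega, ?_, ?_, hPd, ?_, ?_⟩
        · intro x hx1 hx2
          exact ⟨notMem_insert_of (hact x hx1 (by omega)).1 (by omega),
            notMem_insert_of (hact x hx1 (by omega)).2 (show x.val ≠ b-1 by omega)⟩
        · intro p hpP
          obtain ⟨h1, h2, h3, h4, h5, h6⟩ := hP p hpP
          exact ⟨h1, not_inF_insert h2 (by omega), not_inF_insert h3 (show p ≠ b-1 by omega),
            not_inF_insert h4 (by omega), not_inF_insert h5 (show p+1 ≠ b-1 by omega), by omega⟩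
        · exact disj_insert hMB (show v.val ≠ b-1 by omega) hvB huM
        · intro w hlive'
          have hlive : ∀ x : Fin n, Nb w.val x.val → x ∉ B :=
            fun x hx hxB => hlive' x hx (Finset.mem_insert_of_mem hxB)
          have hnbu : ¬ Nb w.val (b-1) :=
            fun hN => hlive' ⟨b-1, hbn1⟩ hN (Finset.mem_insert_self _ _)
          unfold Nb at hnbu
          rcases hcov w hlive with ⟨hA1, x, y, hxy, hx1, hy1, hxM, hyM⟩ | hB
          · left
            have hbx := hA1 x hx1 hxM
            have hby := hA1 y hy1 hyM
            have hwb := wits_bound (val_ne hxy) hx1 hy1 hbx.1 hbx.2 hby.1 hby.2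
            have hx1' := hx1; have hy1' := hy1
            unfold Nb at hx1' hy1'
            refine ⟨?_, x, y, hxy, hx1, hy1, notMem_insert_of hxM (by omega),
              notMem_insert_of hyM (by omega)⟩
            intro z hz hzM'
            have hzM : z ∉ M := fun hq => hzM' (Finset.mem_insert_of_mem hq)
            have hbz := hA1 z hz hzM
            have hz' := hz; unfold Nb at hz'
            omega
          · right; exact hB
    · by_cases hva : a < v.val
      · -- case I3
        have hr2 : 2^j ≤ b - v.val := by omega
        have hu1n : v.val - 1 < n := by omega
        have huM : (⟨v.val-1, hu1n⟩ : Fin n) ∉ M :=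
          (hact ⟨v.val-1, hu1n⟩ (show a ≤ v.val-1 by omega) (show v.val-1 ≤ b by omega)).1
        have huB : (⟨v.val-1, hu1n⟩ : Fin n) ∉ B :=
          (hact ⟨v.val-1, hu1n⟩ (show a ≤ v.val-1 by omega) (show v.val-1 ≤ b by omega)).2
        refine ⟨⟨v.val-1, hu1n⟩, show v.val-1 ≠ v.val by omega, huM, huB,
          v.val+1, b, P ∪ (Finset.range ((v.val - 1 - a)/2)).image (fun i => a + 2*i),
          by omega, hbn, by omega, ?_, ?_, ?_, ?_, ?_⟩
        · intro x hx1 hx2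
          exact ⟨notMem_insert_of (hact x (by omega) hx2).1 (by omega),
            notMem_insert_of (hact x (by omega) hx2).2 (show x.val ≠ v.val-1 by omega)⟩
        · intro p hpP
          rcases Finset.mem_union.1 hpP with hpP | hpP
          · obtain ⟨h1, h2, h3, h4, h5, h6⟩ := hP p hpP
            exact ⟨h1, not_inF_insert h2 (by omega),
              not_inF_insert h3 (show p ≠ v.val-1 by omega),
              not_inF_insert h4 (by omega),
              not_inF_insert h5 (show p+1 ≠ v.val-1 by omega), by omega⟩
          · obtain ⟨i, hi, rfl⟩ := Finset.mem_image.1 hpP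
            have hi' := Finset.mem_range.1 hi
            have hq1 : a + 2*i + 1 ≤ v.val - 2 := by omega
            have hqn : a + 2*i < n := by omega
            have hqn1 : a + 2*i + 1 < n := by omega
            refine ⟨by omega,
              not_inF_insert (not_inF_of_act hqn
                (hact ⟨a+2*i, hqn⟩ (show a ≤ a+2*i by omega)
                  (show a+2*i ≤ b by omega)).1) (by omega),
              not_inF_insert (not_inF_of_act hqn
                (hact ⟨a+2*i, hqn⟩ (show a ≤ a+2*i by omega)
                  (show a+2*i ≤ b by omega)).2) (show a+2*i ≠ v.val-1 by omega),
              not_inF_insert (not_inF_of_act hqn1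
                (hact ⟨a+2*i+1, hqn1⟩ (show a ≤ a+2*i+1 by omega)
                  (show a+2*i+1 ≤ b by omega)).1) (by omega),
              not_inF_insert (not_inF_of_act hqn1
                (hact ⟨a+2*i+1, hqn1⟩ (show a ≤ a+2*i+1 by omega)
                  (show a+2*i+1 ≤ b by omega)).2) (show a+2*i+1 ≠ v.val-1 by omega),
              by omega⟩
        · intro p hpP q hqP hne
          rcases Finset.mem_union.1 hpP with hp' | hp' <;>
            rcases Finset.mem_union.1 hqP with hq' | hq'
          · exact hPd p hp' q hq' hne
          · obtain ⟨i, hi, rfl⟩ := Finset.mem_image.1 hq'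
            have hi' := Finset.mem_range.1 hi
            have h6 := (hP p hp').2.2.2.2.2
            constructor <;> omega
          · obtain ⟨i, hi, rfl⟩ := Finset.mem_image.1 hp'
            have hi' := Finset.mem_range.1 hi
            have h6 := (hP q hq').2.2.2.2.2
            constructor <;> omega
          · obtain ⟨i, hi, rfl⟩ := Finset.mem_image.1 hp'
            obtain ⟨i2, hi2, rfl⟩ := Finset.mem_image.1 hq'
            have hi' := Finset.mem_range.1 hi
            have hi2' := Finset.mem_range.1 hi2
            constructor <;> omega
        · exact disj_insert hMB (show v.val ≠ v.val-1 by omega) hvB huM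
        · intro w hlive'
          have hlive : ∀ x : Fin n, Nb w.val x.val → x ∉ B :=
            fun x hx hxB => hlive' x hx (Finset.mem_insert_of_mem hxB)
          have hnbu : ¬ Nb w.val (v.val-1) :=
            fun hN => hlive' ⟨v.val-1, hu1n⟩ hN (Finset.mem_insert_self _ _)
          unfold Nb at hnbu
          rcases hcov w hlive with ⟨hA1, x, y, hxy, hx1, hy1, hxM, hyM⟩ | ⟨q, hqP, hq1, hq2⟩
          · have hbx := hA1 x hx1 hxM
            have hby := hA1 y hy1 hyM
            have hwb := wits_bound (val_ne hxy) hx1 hy1 hbx.1 hbx.2 hby.1 hby.2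
            have hx1' := hx1; have hy1' := hy1
            unfold Nb at hx1' hy1'
            rcases (show v.val + 2 ≤ w.val ∨ w.val = v.val + 1 ∨ w.val + 3 ≤ v.val
              by omega) with hw | hw | hw
            · left
              refine ⟨?_, x, y, hxy, hx1, hy1, notMem_insert_of hxM (by omega),
                notMem_insert_of hyM (by omega)⟩
              intro z hz hzM'
              have hzM : z ∉ M := fun hq' => hzM' (Finset.mem_insert_of_mem hq')
              have hbz := hA1 z hz hzM
              have hz' := hz; unfold Nb at hz'
              omega
            · left
              have hm2 : v.val + 2 < n := by omega
              have hm1 : v.val + 1 < n := by omega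
              have hM2 : (⟨v.val+2, hm2⟩ : Fin n) ∉ M :=
                (hact _ (show a ≤ v.val+2 by omega) (show v.val+2 ≤ b by omega)).1
              have hM1 : (⟨v.val+1, hm1⟩ : Fin n) ∉ M :=
                (hact _ (show a ≤ v.val+1 by omega) (show v.val+1 ≤ b by omega)).1
              refine ⟨?_, ⟨v.val+1, hm1⟩, ⟨v.val+2, hm2⟩,
                by simp only [ne_eq, Fin.mk.injEq]; omega,
                by unfold Nb; simp only [Fin.val_mk]; omega,
                by unfold Nb; simp only [Fin.val_mk]; omega,
                notMem_insert_of hM1 (show v.val+1 ≠ v.val by omega),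
                notMem_insert_of hM2 (show v.val+2 ≠ v.val by omega)⟩
              intro z hz hzM'
              have hzv : z.val ≠ v.val := by
                intro he
                exact hzM' (by rw [show z = v from Fin.ext he]; exact Finset.mem_insert_self _ _)
              have hzM : z ∉ M := fun hq' => hzM' (Finset.mem_insert_of_mem hq')
              have hbz := hA1 z hz hzM
              have hz' := hz; unfold Nb at hz'
              omega
            · right
              obtain ⟨q, ⟨i, hi, hqe⟩, k1, k2, k3, k4⟩ := pairsL_cover hwb.1 hw
              exact ⟨q, Finset.mem_union_right _ (Finset.mem_image.2 ⟨i, hi, hqe⟩), k1, k2⟩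
          · right
            exact ⟨q, Finset.mem_union_left _ hqP, hq1, hq2⟩
      · -- case I4 : v = a
        have hvv : v.val = a := by omega
        have ha1n : a + 1 < n := by omega
        have huM : (⟨a+1, ha1n⟩ : Fin n) ∉ M :=
          (hact ⟨a+1, ha1n⟩ (show a ≤ a+1 by omega) (show a+1 ≤ b by omega)).1
        have huB : (⟨a+1, ha1n⟩ : Fin n) ∉ B :=
          (hact ⟨a+1, ha1n⟩ (show a ≤ a+1 by omega) (show a+1 ≤ b by omega)).2
        refine ⟨⟨a+1, ha1n⟩, show a+1 ≠ v.val by omega, huM, huB,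
          a+2, b, P, by omega, hbn, by omega, ?_, ?_, hPd, ?_, ?_⟩
        · intro x hx1 hx2
          exact ⟨notMem_insert_of (hact x (by omega) hx2).1 (by omega),
            notMem_insert_of (hact x (by omega) hx2).2 (show x.val ≠ a+1 by omega)⟩
        · intro p hpP
          obtain ⟨h1, h2, h3, h4, h5, h6⟩ := hP p hpP
          exact ⟨h1, not_inF_insert h2 (by omega), not_inF_insert h3 (show p ≠ a+1 by omega),
            not_inF_insert h4 (by omega), not_inF_insert h5 (show p+1 ≠ a+1 by omega), by omega⟩
        · exact disj_insert hMB (show v.val ≠ a+1 by omega) hvB huM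
        · intro w hlive'
          have hlive : ∀ x : Fin n, Nb w.val x.val → x ∉ B :=
            fun x hx hxB => hlive' x hx (Finset.mem_insert_of_mem hxB)
          have hnbu : ¬ Nb w.val (a+1) :=
            fun hN => hlive' ⟨a+1, ha1n⟩ hN (Finset.mem_insert_self _ _)
          unfold Nb at hnbu
          rcases hcov w hlive with ⟨hA1, x, y, hxy, hx1, hy1, hxM, hyM⟩ | hB
          · left
            have hbx := hA1 x hx1 hxM
            have hby := hA1 y hy1 hyM
            have hwb := wits_bound (val_ne hxy) hx1 hy1 hbx.1 hbx.2 hby.1 hby.2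
            have hx1' := hx1; have hy1' := hy1
            unfold Nb at hx1' hy1'
            refine ⟨?_, x, y, hxy, hx1, hy1, notMem_insert_of hxM (by omega),
              notMem_insert_of hyM (by omega)⟩
            intro z hz hzM'
            have hzM : z ∉ M := fun hq => hzM' (Finset.mem_insert_of_mem hq)
            have hbz := hA1 z hz hzM
            have hz' := hz; unfold Nb at hz'
            omega
          · right; exact hB
  · -- Staller plays outside the active interval
    by_cases hpr : ∃ p ∈ P, v.val = p ∨ v.val = p + 1
    · -- case O1 : v hits a pair, reply with partner
      obtain ⟨p, hpP, hvp⟩ := hpr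
      obtain ⟨hpn, hMp, hBp, hMp1, hBp1, hpd⟩ := hP p hpP
      have hpn' : p < n := by omega
      have hinv : ∀ (u : Fin n),
          (u.val = p ∧ v.val = p + 1) ∨ (u.val = p + 1 ∧ v.val = p) →
          u ∉ M → u ∉ B →
          DomInv n j (insert v M) (insert u B) := by
        intro u hu huM huB
        refine ⟨a, b, P.erase p, hab, hbn, by omega, ?_, ?_, ?_, ?_, ?_⟩
        · intro x hx1 hx2
          exact ⟨notMem_insert_of (hact x hx1 hx2).1 (by omega),
            notMem_insert_of (hact x hx1 hx2).2 (by omega)⟩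
        · intro q hqP
          have hq := Finset.mem_of_mem_erase hqP
          have hqne : q ≠ p := Finset.ne_of_mem_erase hqP
          obtain ⟨k1, k2, k3, k4, k5, k6⟩ := hP q hq
          obtain ⟨d1, d2⟩ := hPd q hq p hpP hqne
          exact ⟨k1, not_inF_insert k2 (by omega), not_inF_insert k3 (by omega),
            not_inF_insert k4 (by omega), not_inF_insert k5 (by omega), k6⟩
        · intro q hqP r hrP hne
          exact hPd q (Finset.mem_of_mem_erase hqP) r (Finset.mem_of_mem_erase hrP) hne
        · exact disj_insert hMB (by omega) hvB huM
        · intro w hlive'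
          have hlive : ∀ x : Fin n, Nb w.val x.val → x ∉ B :=
            fun x hx hxB => hlive' x hx (Finset.mem_insert_of_mem hxB)
          have hnbu : ¬ Nb w.val u.val :=
            fun hN => hlive' u hN (Finset.mem_insert_self _ _)
          rcases hcov w hlive with ⟨hA1, x, y, hxy, hx1, hy1, hxM, hyM⟩ | ⟨q, hqP, hq1, hq2⟩
          · left
            have hbx := hA1 x hx1 hxM
            have hby := hA1 y hy1 hyM
            refine ⟨?_, x, y, hxy, hx1, hy1, notMem_insert_of hxM (by omega),
              notMem_insert_of hyM (by omega)⟩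
            intro z hz hzM'
            exact hA1 z hz (fun hq' => hzM' (Finset.mem_insert_of_mem hq'))
          · by_cases hqp : q = p
            · subst hqp
              rcases hu with ⟨hu1, -⟩ | ⟨hu1, -⟩
              · exact absurd (by rw [hu1]; exact hq1) hnbu
              · exact absurd (by rw [hu1]; exact hq2) hnbu
            · exact Or.inr ⟨q, Finset.mem_erase.2 ⟨hqp, hqP⟩, hq1, hq2⟩
      rcases hvp with hvp | hvp
      · refine ⟨⟨p+1, hpn⟩, by simp only [Fin.val_mk]; omega,
          fun hm => hMp1 ⟨hpn, hm⟩, fun hm => hBp1 ⟨hpn, hm⟩, ?_⟩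
        exact hinv ⟨p+1, hpn⟩ (Or.inr ⟨rfl, hvp⟩)
          (fun hm => hMp1 ⟨hpn, hm⟩) (fun hm => hBp1 ⟨hpn, hm⟩)
      · refine ⟨⟨p, hpn'⟩, by simp only [Fin.val_mk]; omega,
          fun hm => hMp ⟨hpn', hm⟩, fun hm => hBp ⟨hpn', hm⟩, ?_⟩
        exact hinv ⟨p, hpn'⟩ (Or.inl ⟨rfl, hvp⟩)
          (fun hm => hMp ⟨hpn', hm⟩) (fun hm => hBp ⟨hpn', hm⟩)
    · -- case O2 : v misses all pairs, reply at a
      have han : a < n := lt_of_le_of_lt hab hbn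
      have huM : (⟨a, han⟩ : Fin n) ∉ M := (hact ⟨a, han⟩ le_rfl hab).1
      have huB : (⟨a, han⟩ : Fin n) ∉ B := (hact ⟨a, han⟩ le_rfl hab).2
      refine ⟨⟨a, han⟩, by simp only [Fin.val_mk]; omega, huM, huB,
        a+1, b, P, by omega, hbn, by omega, ?_, ?_, hPd, ?_, ?_⟩
      · intro x hx1 hx2
        refine ⟨notMem_insert_of (hact x (by omega) hx2).1 (by omega),
          notMem_insert_of (hact x (by omega) hx2).2 (by simp only [Fin.val_mk]; omega)⟩
      · intro p hpP
        obtain ⟨h1, h2, h3, h4, h5, h6⟩ := hP p hpP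
        have hnp : ¬(v.val = p ∨ v.val = p + 1) := fun hc => hpr ⟨p, hpP, hc⟩
        exact ⟨h1, not_inF_insert h2 (by omega), not_inF_insert h3 (by simp only [Fin.val_mk]; omega),
          not_inF_insert h4 (by omega), not_inF_insert h5 (by simp only [Fin.val_mk]; omega),
          by omega⟩
      · exact disj_insert hMB (by simp only [Fin.val_mk]; omega) hvB huM
      · intro w hlive'
        have hlive : ∀ x : Fin n, Nb w.val x.val → x ∉ B :=
          fun x hx hxB => hlive' x hx (Finset.mem_insert_of_mem hxB)
        have hnbu : ¬ Nb w.val a :=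
          fun hN => hlive' ⟨a, han⟩ hN (Finset.mem_insert_self _ _)
        rcases hcov w hlive with ⟨hA1, x, y, hxy, hx1, hy1, hxM, hyM⟩ | hB
        · left
          have hbx := hA1 x hx1 hxM
          have hby := hA1 y hy1 hyM
          refine ⟨?_, x, y, hxy, hx1, hy1, notMem_insert_of hxM (by omega),
            notMem_insert_of hyM (by omega)⟩
          intro z hz hzM'
          have hzM : z ∉ M := fun hq => hzM' (Finset.mem_insert_of_mem hq)
          have hbz := hA1 z hz hzM
          have hza : z.val ≠ a := fun he => hnbu (he ▸ hz)
          omega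
        · right; exact hB

lemma DomInv_noWin0 {j : ℕ} {M B : Finset (Fin n)} (h : DomInv n j M B) :
    ¬ ∃ e ∈ nbhdHyp (pathGraph n), e ⊆ M := by
  obtain ⟨a, b, -, hab, hbn, -, hact, -⟩ := id h
  rintro ⟨e, he, hsub⟩
  exact DomInv_noWin h ((hact ⟨a, lt_of_le_of_lt hab hbn⟩ le_rfl hab).2)
    ⟨e, he, hsub.trans (Finset.subset_insert _ _)⟩

/-- Lower bound: under the invariant at level `j`, Staller needs at least
`j+1` further moves. -/
lemma lower_main : ∀ (j : ℕ) (M B : Finset (Fin n)),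
    (j = 0 → ¬∃ e ∈ nbhdHyp (pathGraph n), e ⊆ M) →
    (1 ≤ j → DomInv n j M B) →
    ((j+1 : ℕ) : ℕ∞) ≤ mbVal (nbhdHyp (pathGraph n)) true M B := by
  intro j
  induction j with
  | zero =>
    intro M B h0 _
    rw [mbVal_true_eq, if_neg (h0 rfl)]
    refine le_iInf fun v => le_iInf fun _ => ?_
    have h1 : (1:ℕ∞) ≤ 1 + mbVal (nbhdHyp (pathGraph n)) false (insert v M) B :=
      le_add_right le_rfl
    simpa using h1
  | succ j ih =>
    intro M B _ hInv
    have hI := hInv (by omega)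
    have hnw : ¬∃ e ∈ nbhdHyp (pathGraph n), e ⊆ M := DomInv_noWin0 hI
    rw [mbVal_true_eq, if_neg hnw]
    refine le_iInf fun v => le_iInf fun hv => ?_
    have hvMB : v ∉ M ∧ v ∉ B := by
      simp only [Finset.mem_sdiff, Finset.mem_univ, true_and, Finset.mem_union,
        not_or] at hv
      exact hv
    have hcast : ((j+1+1 : ℕ) : ℕ∞) = 1 + ((j+1 : ℕ) : ℕ∞) := by push_cast; ring
    rw [hcast]
    refine add_le_add_right ?_ 1
    have hnw' : ¬∃ e ∈ nbhdHyp (pathGraph n), e ⊆ insert v M :=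
      DomInv_noWin hI hvMB.2
    rw [mbVal_false_eq, if_neg hnw']
    by_cases hemp : Finset.univ \ (insert v M ∪ B) = ∅
    · rw [if_pos hemp]; exact le_top
    · rw [if_neg hemp]
      by_cases hj0 : j = 0
      · subst hj0
        obtain ⟨u, hu⟩ := Finset.nonempty_iff_ne_empty.2 hemp
        refine le_trans ?_
          (le_iSup₂ (f := fun u _ => mbVal (nbhdHyp (pathGraph n)) true (insert v M)
            (insert u B)) u hu)
        exact ih (insert v M) (insert u B) (fun _ => hnw') (fun h1 => absurd h1 (by omega))
      · obtain ⟨u, hune, huM, huB, hDI⟩ := maintain (by omega) hI hvMB.1 hvMB.2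
        have hu : u ∈ Finset.univ \ (insert v M ∪ B) := by
          simp only [Finset.mem_sdiff, Finset.mem_univ, true_and, Finset.mem_union,
            Finset.mem_insert, not_or]
          exact ⟨⟨fun he => hune (congrArg Fin.val he), huM⟩, huB⟩
        refine le_trans ?_
          (le_iSup₂ (f := fun u _ => mbVal (nbhdHyp (pathGraph n)) true (insert v M)
            (insert u B)) u hu)
        exact ih (insert v M) (insert u B) (fun h1 => absurd h1 hj0) (fun _ => hDI)

/-- Staller's winning configuration: a free interval `[a, a+g)` of odd length
`g ≤ 2^k - 1` whose two ends are anchored (path end or Staller vertex). -/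
def Conf (n k : ℕ) (M B : Finset (Fin n)) : Prop :=
  ∃ a g : ℕ, 1 ≤ g ∧ g % 2 = 1 ∧ g ≤ 2^k - 1 ∧ a + g ≤ n ∧
    (∀ x : Fin n, a ≤ x.val → x.val < a + g → x ∉ M ∧ x ∉ B) ∧
    (a = 0 ∨ inF M (a-1)) ∧ (a + g = n ∨ inF M (a+g))

set_option maxHeartbeats 1000000 in
/-- Upper bound: with a winning configuration at level `k`, Staller wins within
`k` moves. -/
lemma upper_main : ∀ (k : ℕ) (M B : Finset (Fin n)), Conf n k M B →
    mbVal (nbhdHyp (pathGraph n)) true M B ≤ (k : ℕ∞) := by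
  intro k
  induction k with
  | zero =>
    rintro M B ⟨a, g, hg1, -, hg2, -⟩
    have : (2:ℕ)^0 = 1 := pow_zero 2
    omega
  | succ k ih =>
    rintro M B ⟨a, g, hg1, hodd, hgle, hagn, hfree, hancL, hancR⟩
    have h1k : 1 ≤ (2:ℕ)^k := Nat.one_le_two_pow
    rw [mbVal_true_eq]
    split_ifs with hwin
    · exact zero_le
    by_cases hgone : g = 1
    · subst hgone
      have han : a < n := by omega
      have hfa := hfree ⟨a, han⟩ le_rfl (show a < a + 1 by omega)
      have hmem : (⟨a, han⟩ : Fin n) ∈ Finset.univ \ (M ∪ B) := by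
        simp [Finset.mem_sdiff, hfa.1, hfa.2]
      refine le_trans (iInf₂_le (⟨a, han⟩) hmem) ?_
      have hzero : mbVal (nbhdHyp (pathGraph n)) false (insert ⟨a, han⟩ M) B = 0 := by
        rw [mbVal_false_eq, if_pos]
        refine ⟨closedNbhdFinset (pathGraph n) ⟨a, han⟩, cnf_mem_E _, ?_⟩
        intro x hx
        have hx' := mem_cnf.1 hx
        unfold Nb at hx'
        simp only [Fin.val_mk] at hx'
        rcases hx' with hx' | hx' | hx'
        · exact Finset.mem_insert.2 (Or.inl (Fin.ext hx'))
        · obtain ⟨hlt, hm⟩ := hancL.resolve_left (by omega)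
          have hxe : x = ⟨a-1, hlt⟩ := Fin.ext (by simp only [Fin.val_mk]; omega)
          rw [hxe]; exact Finset.mem_insert_of_mem hm
        · obtain ⟨hlt, hm⟩ := hancR.resolve_left (by have := x.isLt; omega)
          have hxe : x = ⟨a+1, hlt⟩ := Fin.ext (by simp only [Fin.val_mk]; omega)
          rw [hxe]; exact Finset.mem_insert_of_mem hm
      rw [hzero]
      have h1 : (1:ℕ∞) ≤ ((k+1:ℕ) : ℕ∞) := by exact_mod_cast Nat.succ_le_succ (Nat.zero_le k)
      simpa using h1
    · -- g ≥ 3 : split the interval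
      have hg3 : 3 ≤ g := by omega
      rcases Nat.eq_zero_or_pos k with rfl | hkpos
      · exfalso; norm_num at hgle; omega
      obtain ⟨k', rfl⟩ : ∃ k', k = k'+1 := ⟨k-1, by omega⟩
      have hA : (2:ℕ)^(k'+2) = 4*2^k' := by ring
      have hB : (2:ℕ)^(k'+1) = 2*2^k' := by ring
      have hC : 1 ≤ (2:ℕ)^k' := Nat.one_le_two_pow
      set g2 := min (g - 2) (2^(k'+1) - 1) with hg2def
      set g1 := g - 1 - g2 with hg1def
      have hg2odd : g2 % 2 = 1 := by omega
      have hg1odd : g1 % 2 = 1 := by omega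
      have hg2b : 1 ≤ g2 ∧ g2 ≤ 2^(k'+1) - 1 := by omega
      have hg1b : 1 ≤ g1 ∧ g1 ≤ 2^(k'+1) - 1 := by omega
      have hsum : g1 + g2 + 1 = g := by omega
      have hvn : a + g1 < n := by omega
      have hfv := hfree ⟨a+g1, hvn⟩ (show a ≤ a+g1 by omega) (show a+g1 < a+g by omega)
      have hmem : (⟨a+g1, hvn⟩ : Fin n) ∈ Finset.univ \ (M ∪ B) := by
        simp [Finset.mem_sdiff, hfv.1, hfv.2]
      refine le_trans (iInf₂_le (⟨a+g1, hvn⟩) hmem) ?_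
      have hcast : ((k'+1+1:ℕ) : ℕ∞) = 1 + ((k'+1:ℕ) : ℕ∞) := by push_cast; ring
      rw [hcast]
      refine add_le_add_right ?_ 1
      rw [mbVal_false_eq]
      split_ifs with hwin' hemp
      · exact zero_le
      · exfalso
        have han : a < n := by omega
        have hfa := hfree ⟨a, han⟩ le_rfl (show a < a + g by omega)
        have hina : (⟨a, han⟩ : Fin n) ∈ Finset.univ \ (insert ⟨a+g1, hvn⟩ M ∪ B) := by
          simp only [Finset.mem_sdiff, Finset.mem_univ, true_and, Finset.mem_union,
            Finset.mem_insert, not_or]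
          refine ⟨⟨fun he => ?_, hfa.1⟩, hfa.2⟩
          have := congrArg Fin.val he
          simp only [Fin.val_mk] at this
          omega
        rw [hemp] at hina
        exact absurd hina (Finset.notMem_empty _)
      · refine iSup₂_le fun u hu => ?_
        simp only [Finset.mem_sdiff, Finset.mem_univ, true_and, Finset.mem_union,
          Finset.mem_insert, not_or] at hu
        obtain ⟨⟨huv, huM⟩, huB⟩ := hu
        by_cases hus : a ≤ u.val ∧ u.val < a + g1
        · -- u in left part: pursue right configuration
          apply ih
          refine ⟨a+g1+1, g2, by omega, hg2odd, by omega, by omega, ?_, ?_, ?_⟩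
          · intro x hx1 hx2
            have hf := hfree x (by omega) (by omega)
            exact ⟨notMem_insert_of hf.1 (show x.val ≠ a+g1 by omega),
              notMem_insert_of hf.2 (show x.val ≠ u.val by omega)⟩
          · exact Or.inr ⟨hvn, by simpa using Finset.mem_insert_self _ M⟩
          · have he : (a+g1+1)+g2 = a + g := by omega
            rw [he]
            rcases hancR with h | h
            · exact Or.inl h
            · exact Or.inr ⟨h.1, Finset.mem_insert_of_mem h.2⟩
        · -- otherwise: pursue left configuration
          apply ih
          refine ⟨a, g1, by omega, hg1odd, by omega, by omega, ?_, ?_, ?_⟩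
          · intro x hx1 hx2
            have hf := hfree x hx1 (by omega)
            exact ⟨notMem_insert_of hf.1 (show x.val ≠ a+g1 by omega),
              notMem_insert_of hf.2 (show x.val ≠ u.val by omega)⟩
          · rcases hancL with h | h
            · exact Or.inl h
            · exact Or.inr ⟨h.1, Finset.mem_insert_of_mem h.2⟩
          · exact Or.inr ⟨hvn, Finset.mem_insert_self _ _⟩

end Dev


/-- If `n` is an odd positive integer, then `γ'_SMB(P_n) = ⌊log₂ n⌋ + 1`. -/
theorem stmt_11 (n : ℕ) (hn : 0 < n) (ho : Odd n) :
    gammaSMB' (SimpleGraph.pathGraph n) = (Nat.log 2 n + 1 : ℕ) := by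
  have hK : n < 2^(Nat.log 2 n + 1) := Nat.lt_pow_succ_log_self (by norm_num) n
  have hK2 : 2^(Nat.log 2 n) ≤ n := Nat.pow_log_le_self 2 hn.ne'
  unfold gammaSMB'
  apply le_antisymm
  · apply upper_main
    refine ⟨0, n, hn, (Nat.odd_iff).1 ho, by omega, by omega, ?_, Or.inl rfl,
      Or.inl (Nat.zero_add n)⟩
    intro x _ _
    simp
  · have hlow := lower_main (n := n) (Nat.log 2 n) ∅ ∅ ?_ ?_
    · exact hlow
    · intro _
      rintro ⟨e, ⟨w, rfl⟩, hsub⟩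
      have hw : w ∈ closedNbhdFinset (SimpleGraph.pathGraph n) w :=
        mem_cnf.2 (Or.inl rfl)
      exact absurd (hsub hw) (Finset.notMem_empty w)
    · intro hlog
      have hn2 : 2 ≤ n := by
        calc 2 = 2^1 := rfl
        _ ≤ 2^(Nat.log 2 n) := Nat.pow_le_pow_right (by norm_num) hlog
        _ ≤ n := hK2
      refine ⟨0, n-1, ∅, by omega, by omega, by omega, ?_, ?_, ?_, ?_, ?_⟩
      · intro x _ _; simp
      · intro p hp; simp at hp
      · intro p hp q hq; simp at hp
      · intro x hx; simp at hx
      · intro w _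
        left
        constructor
        · intro x _ _
          have := x.isLt
          omega
        · by_cases hw : w.val + 1 < n
          · refine ⟨w, ⟨w.val+1, hw⟩, ?_, Or.inl rfl, ?_, by simp, by simp⟩
            · intro he
              have := congrArg Fin.val he
              simp only [Fin.val_mk] at this
              omega
            · exact Or.inr (Or.inr rfl)
          · have hwn : w.val = n-1 := by have := w.isLt; omega
            refine ⟨⟨w.val-1, by omega⟩, w, ?_, ?_, Or.inl rfl, by simp, by simp⟩
            · intro he
              have := congrArg Fin.val he
              simp only [Fin.val_mk] at this
              omega
            · exact Or.inr (Or.inl (by simp only [Fin.val_mk]; omega))
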